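/- In a CAT(1) space X, if a point x is r-removable for some r > 0, then x is r'-removable for every r' > r. -/

import Mathlib

open scoped ENNReal RealInnerProductSpace
open Set Filter

noncomputable section

/-- A complete metric space is *CAT(1)* if any two points at distance `< π` have a
midpoint, and the spherical (curvature 1) midpoint comparison inequality holds for
triangles of perimeter `< 2π`. -/
def IsCAT1 (X : Type*) [MetricSpace X] : Prop :=
  CompleteSpace X ∧
  (∀ x y : X, dist x y < Real.pi →
      ∃ m : X, dist x m = dist x y / 2 ∧ dist y m = dist x y / 2) ∧
  (∀ x y z m : X, dist x y < Real.pi →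
      dist x m = dist x y / 2 → dist y m = dist x y / 2 →
      dist x z + dist y z + dist x y < 2 * Real.pi →
      (Real.cos (dist x z) + Real.cos (dist y z)) / 2 ≤
        Real.cos (dist z m) * Real.cos (dist x y / 2))

/-- `γ` is a (unit–speed, minimizing) geodesic on the interval `[a,b]`. -/
def IsGeodesicOn {X : Type*} [MetricSpace X] (γ : ℝ → X) (a b : ℝ) : Prop :=
  ∀ s ∈ Set.Icc a b, ∀ t ∈ Set.Icc a b, dist (γ s) (γ t) = |s - t|

/-- A subset of a CAT(1) space is convex if any two of its points at distance `< π`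
are joined by a geodesic inside the subset. -/
def IsConvexSet {X : Type*} [MetricSpace X] (C : Set X) : Prop :=
  ∀ x ∈ C, ∀ y ∈ C, dist x y < Real.pi →
    ∃ γ : ℝ → X, γ 0 = x ∧ γ (dist x y) = y ∧ IsGeodesicOn γ 0 (dist x y) ∧
      ∀ t ∈ Set.Icc 0 (dist x y), γ t ∈ C

/-- The closed convex hull of a subset: the intersection of all closed convex sets
containing it. -/
def ClosedConvexHull {X : Type*} [MetricSpace X] (A : Set X) : Set X :=
  ⋂₀ {C : Set X | A ⊆ C ∧ IsClosed C ∧ IsConvexSet C}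

/-- The (circum)radius `rad X = inf_x sup_y d(x,y)` of a metric space, as an
extended nonnegative real. -/
def eRad (X : Type*) [MetricSpace X] : ℝ≥0∞ :=
  ⨅ x : X, ⨆ y : X, edist x y

namespace S11

variable {X : Type*} [MetricSpace X]

noncomputable def mid (hX : IsCAT1 X) (a b : X) : X :=
  if h : dist a b < Real.pi then (hX.2.1 a b h).choose else a

lemma mid_spec (hX : IsCAT1 X) {a b : X} (h : dist a b < Real.pi) :
    dist a (mid hX a b) = dist a b / 2 ∧ dist b (mid hX a b) = dist a b / 2 := by
  rw [mid, dif_pos h]; exact (hX.2.1 a b h).choose_spec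

/-- chain bound -/
lemma chain_le (f : ℕ → X) (Δ : ℝ) (N : ℕ)
    (hcons : ∀ k, k < N → dist (f k) (f (k + 1)) ≤ Δ) :
    ∀ m i, i + m ≤ N → dist (f i) (f (i + m)) ≤ m * Δ := by
  intro m
  induction m with
  | zero => intro i _; simp
  | succ m ih =>
    intro i h
    have h1 : dist (f i) (f (i + (m + 1))) ≤ dist (f i) (f (i + m)) + dist (f (i + m)) (f (i + m + 1)) := by
      rw [show i + (m + 1) = i + m + 1 by ring]
      exact dist_triangle _ _ _
    have h2 := ih i (by omega)
    have h3 := hcons (i + m) (by omega)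
    push_cast
    linarith

lemma level_eq (f : ℕ → X) (Δ : ℝ) (N : ℕ)
    (hcons : ∀ k, k < N → dist (f k) (f (k + 1)) ≤ Δ)
    (hends : dist (f 0) (f N) = N * Δ) :
    ∀ i j, i ≤ j → j ≤ N → dist (f i) (f j) = ((j : ℝ) - i) * Δ := by
  intro i j hij hjN
  have hle : dist (f i) (f j) ≤ ((j : ℝ) - i) * Δ := by
    have := chain_le f Δ N hcons (j - i) i (by omega)
    rw [show i + (j - i) = j by omega] at this
    have : dist (f i) (f j) ≤ ((j - i : ℕ) : ℝ) * Δ := this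
    rwa [Nat.cast_sub hij] at this
  have h1 := chain_le f Δ N hcons i 0 (by omega)
  rw [zero_add] at h1
  have h2 := chain_le f Δ N hcons (N - j) j (by omega)
  rw [show j + (N - j) = N by omega, Nat.cast_sub hjN] at h2
  have tri : dist (f 0) (f N) ≤ dist (f 0) (f i) + dist (f i) (f j) + dist (f j) (f N) :=
    dist_triangle4 _ _ _ _
  rw [hends] at tri
  linarith

variable (hX : IsCAT1 X)

noncomputable def seq (hX : IsCAT1 X) (p q : X) : ℕ → ℕ → X
  | 0, k => if k = 0 then p else q
  | (n + 1), k =>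
    if k % 2 = 0 then seq hX p q n (k / 2)
    else mid hX (seq hX p q n (k / 2)) (seq hX p q n (k / 2 + 1))

lemma seq_zero (p q : X) (n : ℕ) : seq hX p q n 0 = p := by
  induction n with
  | zero => simp [seq]
  | succ n ih => simp [seq, ih]

lemma seq_top (p q : X) (n : ℕ) : seq hX p q n (2 ^ n) = q := by
  induction n with
  | zero => simp [seq]
  | succ n ih =>
    have h1 : 2 ^ (n + 1) % 2 = 0 := by omega
    have h2 : 2 ^ (n + 1) / 2 = 2 ^ n := by omega
    simp [seq, h1, h2, ih]

lemma seq_cons (p q : X) (hπ : dist p q < Real.pi) :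
    ∀ n k, k < 2 ^ n → dist (seq hX p q n k) (seq hX p q n (k + 1)) ≤ dist p q / 2 ^ n := by
  intro n
  induction n with
  | zero =>
    intro k hk
    interval_cases k
    simp [seq]
  | succ n ih =>
    intro k hk
    rcases Nat.even_or_odd k with ⟨m, hm⟩ | ⟨m, hm⟩
    · subst hm
      have hmlt : m < 2 ^ n := by omega
      have e0 : (m + m) % 2 = 0 := by omega
      have e1 : (m + m) / 2 = m := by omega
      have e3 : (m + m + 1) / 2 = m := by omega
      have hd : dist (seq hX p q n m) (seq hX p q n (m + 1)) < Real.pi := by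
        have := ih m hmlt
        have h2 : dist p q / 2 ^ n ≤ dist p q := by
          apply div_le_self dist_nonneg
          exact one_le_pow₀ (by norm_num)
        linarith
      have hms := (mid_spec hX hd).1
      show dist (seq hX p q (n + 1) (m + m)) (seq hX p q (n + 1) (m + m + 1)) ≤ _
      simp only [seq]
      rw [if_pos e0, if_neg (by omega : ¬ (m + m + 1) % 2 = 0), e1, e3, hms, pow_succ, ← div_div]
      have := ih m hmlt
      linarith
    · subst hm
      have hmlt' : m < 2 ^ n := by omega
      have e3 : (2 * m + 1) / 2 = m := by omega
      have e4 : (2 * m + 1 + 1) % 2 = 0 := by omega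
      have e5 : (2 * m + 1 + 1) / 2 = m + 1 := by omega
      have hd : dist (seq hX p q n m) (seq hX p q n (m + 1)) < Real.pi := by
        have := ih m hmlt'
        have h2 : dist p q / 2 ^ n ≤ dist p q := by
          apply div_le_self dist_nonneg
          exact one_le_pow₀ (by norm_num)
        linarith
      have hms := (mid_spec hX hd).2
      show dist (seq hX p q (n + 1) (2 * m + 1)) (seq hX p q (n + 1) (2 * m + 1 + 1)) ≤ _
      simp only [seq]
      rw [if_neg (by omega : ¬ (2 * m + 1) % 2 = 0), if_pos e4, e3, e5, dist_comm, hms,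
        pow_succ, ← div_div]
      have := ih m hmlt'
      linarith

lemma seq_dist (p q : X) (hπ : dist p q < Real.pi) (n : ℕ) :
    ∀ i j, i ≤ 2 ^ n → j ≤ 2 ^ n →
      dist (seq hX p q n i) (seq hX p q n j) = |(i : ℝ) - j| * (dist p q / 2 ^ n) := by
  have key := level_eq (seq hX p q n) (dist p q / 2 ^ n) (2 ^ n) (seq_cons hX p q hπ n)
    (by
      rw [seq_zero, seq_top]
      have : ((2 : ℝ) ^ n) ≠ 0 := by positivity
      push_cast
      field_simp)
  intro i j hi hj
  rcases le_total i j with hij | hij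
  · have hc : (i : ℝ) ≤ j := by exact_mod_cast hij
    rw [key i j hij hj, abs_of_nonpos (by linarith : (i : ℝ) - j ≤ 0)]
    ring
  · have hc : (j : ℝ) ≤ i := by exact_mod_cast hij
    rw [dist_comm, key j i hij hi, abs_of_nonneg (by linarith : (0 : ℝ) ≤ (i : ℝ) - j)]

lemma seq_even (p q : X) (n k : ℕ) : seq hX p q (n + 1) (2 * k) = seq hX p q n k := by
  have e0 : (2 * k) % 2 = 0 := by omega
  have e1 : (2 * k) / 2 = k := by omega
  simp only [seq]
  rw [if_pos e0, e1]

noncomputable def idx (p q : X) (n : ℕ) (t : ℝ) : ℕ := ⌊t * 2 ^ n / dist p q⌋₊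

lemma idx_le (p q : X) (n : ℕ) {t : ℝ} (hd : 0 < dist p q) (ht : t ∈ Set.Icc 0 (dist p q)) :
    idx p q n t ≤ 2 ^ n := by
  have h1 : t * 2 ^ n / dist p q ≤ ((2 ^ n : ℕ) : ℝ) := by
    push_cast
    rw [div_le_iff₀ hd]
    have := ht.2
    nlinarith [pow_pos (by norm_num : (0:ℝ) < 2) n]
  calc idx p q n t ≤ ⌊((2 ^ n : ℕ) : ℝ)⌋₊ := Nat.floor_le_floor h1
    _ = 2 ^ n := Nat.floor_natCast _

lemma idx_approx (p q : X) (n : ℕ) {t : ℝ} (hd : 0 < dist p q) (ht : t ∈ Set.Icc 0 (dist p q)) :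
    |(idx p q n t : ℝ) * (dist p q / 2 ^ n) - t| ≤ dist p q / 2 ^ n := by
  have hy : (0 : ℝ) ≤ t * 2 ^ n / dist p q := by
    have := ht.1
    positivity
  have hΔ : (0 : ℝ) < dist p q / 2 ^ n := by positivity
  have hyΔ : t * 2 ^ n / dist p q * (dist p q / 2 ^ n) = t := by
    field_simp
  have h1 := mul_le_mul_of_nonneg_right (Nat.floor_le hy) hΔ.le
  have h2 := mul_lt_mul_of_pos_right (Nat.lt_floor_add_one (t * 2 ^ n / dist p q)) hΔ
  rw [hyΔ] at h1 h2
  rw [abs_le]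
  constructor
  · show _ ≤ (idx p q n t : ℝ) * (dist p q / 2 ^ n) - t
    unfold idx
    nlinarith
  · show (idx p q n t : ℝ) * (dist p q / 2 ^ n) - t ≤ _
    unfold idx
    nlinarith

lemma idx_double (p q : X) (n : ℕ) {t : ℝ} (hd : 0 < dist p q) (ht : t ∈ Set.Icc 0 (dist p q)) :
    2 * idx p q n t ≤ idx p q (n + 1) t ∧ idx p q (n + 1) t ≤ 2 * idx p q n t + 1 := by
  have hy : (0 : ℝ) ≤ t * 2 ^ n / dist p q := by
    have := ht.1
    positivity
  have hy' : (0 : ℝ) ≤ t * 2 ^ (n + 1) / dist p q := by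
    have := ht.1
    positivity
  have h2y : t * 2 ^ (n + 1) / dist p q = 2 * (t * 2 ^ n / dist p q) := by
    rw [pow_succ]
    ring
  constructor
  · apply Nat.le_floor
    rw [h2y]
    push_cast
    have := Nat.floor_le hy
    unfold idx
    linarith
  · have : idx p q (n + 1) t < 2 * idx p q n t + 2 := by
      unfold idx
      rw [Nat.floor_lt hy', h2y]
      push_cast
      have := Nat.lt_floor_add_one (t * 2 ^ n / dist p q)
      linarith
    omega

noncomputable def app (hX : IsCAT1 X) (p q : X) (n : ℕ) (t : ℝ) : X :=
  seq hX p q n (idx p q n t)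

lemma app_step (p q : X) (hd : 0 < dist p q) (hπ : dist p q < Real.pi) (n : ℕ) {t : ℝ}
    (ht : t ∈ Set.Icc 0 (dist p q)) :
    dist (app hX p q n t) (app hX p q (n + 1) t) ≤ dist p q / 2 * (1 / 2) ^ n := by
  have h1 : app hX p q n t = seq hX p q (n + 1) (2 * idx p q n t) := (seq_even hX p q n _).symm
  have hle := idx_le p q n hd ht
  have hle' := idx_le p q (n + 1) hd ht
  have hdbl := idx_double p q n hd ht
  rw [h1, app, seq_dist hX p q hπ (n + 1) _ _ (by omega) hle']
  have c1 : ((2 * idx p q n t : ℕ) : ℝ) ≤ ((idx p q (n + 1) t : ℕ) : ℝ) := by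
    exact_mod_cast hdbl.1
  have c2 : ((idx p q (n + 1) t : ℕ) : ℝ) ≤ ((2 * idx p q n t : ℕ) : ℝ) + 1 := by
    exact_mod_cast hdbl.2
  have habs : |((2 * idx p q n t : ℕ) : ℝ) - ((idx p q (n + 1) t : ℕ) : ℝ)| ≤ 1 := by
    rw [abs_le]
    constructor <;> linarith
  have hΔ : (0 : ℝ) < dist p q / 2 ^ (n + 1) := by positivity
  have heq : dist p q / 2 ^ (n + 1) = dist p q / 2 * (1 / 2) ^ n := by
    rw [pow_succ, div_pow, one_pow]
    ring
  calc |((2 * idx p q n t : ℕ) : ℝ) - ((idx p q (n + 1) t : ℕ) : ℝ)| * (dist p q / 2 ^ (n + 1))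
      ≤ 1 * (dist p q / 2 ^ (n + 1)) := mul_le_mul_of_nonneg_right habs hΔ.le
    _ = dist p q / 2 * (1 / 2) ^ n := by rw [one_mul, heq]

lemma app_converges (hX : IsCAT1 X) (p q : X) (t : ℝ)
    (h : (0 < dist p q ∧ dist p q < Real.pi) ∧ t ∈ Set.Icc 0 (dist p q)) :
    ∃ z : X, Tendsto (fun n => app hX p q n t) atTop (nhds z) := by
  haveI : CompleteSpace X := hX.1
  apply cauchySeq_tendsto_of_complete
  exact cauchySeq_of_le_geometric (1 / 2) (dist p q / 2) (by norm_num)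
    (fun n => app_step hX p q h.1.1 h.1.2 n h.2)

noncomputable def geo (hX : IsCAT1 X) (p q : X) (t : ℝ) : X :=
  if h : (0 < dist p q ∧ dist p q < Real.pi) ∧ t ∈ Set.Icc 0 (dist p q) then
    (app_converges hX p q t h).choose
  else p

lemma geo_tendsto (hX : IsCAT1 X) (p q : X) (t : ℝ)
    (h : (0 < dist p q ∧ dist p q < Real.pi) ∧ t ∈ Set.Icc 0 (dist p q)) :
    Tendsto (fun n => app hX p q n t) atTop (nhds (geo hX p q t)) := by
  rw [geo, dif_pos h]
  exact (app_converges hX p q t h).choose_spec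

lemma tendsto_delta (c : ℝ) : Tendsto (fun n : ℕ => c / 2 ^ n) atTop (nhds 0) := by
  have h := tendsto_pow_atTop_nhds_zero_of_lt_one (by norm_num : (0:ℝ) ≤ 1 / 2) (by norm_num)
  have h2 := h.const_mul c
  rw [mul_zero] at h2
  convert h2 using 2 with n
  rw [div_pow, one_pow]
  ring

lemma idx_mul_tendsto (p q : X) (hd : 0 < dist p q) {t : ℝ} (ht : t ∈ Set.Icc 0 (dist p q)) :
    Tendsto (fun n => (idx p q n t : ℝ) * (dist p q / 2 ^ n)) atTop (nhds t) := by
  have h0 : Tendsto (fun n => (idx p q n t : ℝ) * (dist p q / 2 ^ n) - t) atTop (nhds 0) := by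
    apply squeeze_zero_norm (fun n => idx_approx p q n hd ht) (tendsto_delta (dist p q))
  have := h0.add (tendsto_const_nhds (x := t))
  simpa using this

lemma geo_dist (hX : IsCAT1 X) (p q : X) (hd : 0 < dist p q) (hπ : dist p q < Real.pi)
    {s t : ℝ} (hs : s ∈ Set.Icc 0 (dist p q)) (ht : t ∈ Set.Icc 0 (dist p q)) :
    dist (geo hX p q s) (geo hX p q t) = |s - t| := by
  have hmem : 0 < dist p q ∧ dist p q < Real.pi := ⟨hd, hπ⟩
  have T1 := (geo_tendsto hX p q s ⟨hmem, hs⟩).dist (geo_tendsto hX p q t ⟨hmem, ht⟩)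
  have T2 : Tendsto (fun n => dist (app hX p q n s) (app hX p q n t)) atTop (nhds |s - t|) := by
    have hA := idx_mul_tendsto p q hd hs
    have hB := idx_mul_tendsto p q hd ht
    have hAB := (hA.sub hB).abs
    have heq : ∀ n, dist (app hX p q n s) (app hX p q n t) =
        |(idx p q n s : ℝ) * (dist p q / 2 ^ n) - (idx p q n t : ℝ) * (dist p q / 2 ^ n)| := by
      intro n
      rw [app, app, seq_dist hX p q hπ n _ _ (idx_le p q n hd hs) (idx_le p q n hd ht)]
      rw [← sub_mul, abs_mul, abs_of_nonneg (by positivity : (0:ℝ) ≤ dist p q / 2 ^ n)]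
    rw [funext heq]
    exact hAB
  exact tendsto_nhds_unique T1 T2

lemma geo_zero (hX : IsCAT1 X) (p q : X) (hd : 0 < dist p q) (hπ : dist p q < Real.pi) :
    geo hX p q 0 = p := by
  have h0 : (0:ℝ) ∈ Set.Icc 0 (dist p q) := ⟨le_refl 0, hd.le⟩
  have T1 := geo_tendsto hX p q 0 ⟨⟨hd, hπ⟩, h0⟩
  have heq : ∀ n, app hX p q n 0 = p := by
    intro n
    rw [app]
    have : idx p q n 0 = 0 := by
      unfold idx
      norm_num
    rw [this, seq_zero]
  rw [funext heq] at T1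
  exact tendsto_nhds_unique T1 tendsto_const_nhds

lemma geo_last (hX : IsCAT1 X) (p q : X) (hd : 0 < dist p q) (hπ : dist p q < Real.pi) :
    geo hX p q (dist p q) = q := by
  have h0 : dist p q ∈ Set.Icc 0 (dist p q) := ⟨hd.le, le_refl _⟩
  have T1 := geo_tendsto hX p q (dist p q) ⟨⟨hd, hπ⟩, h0⟩
  have heq : ∀ n, app hX p q n (dist p q) = q := by
    intro n
    rw [app]
    have h1 : dist p q * 2 ^ n / dist p q = ((2 ^ n : ℕ) : ℝ) := by
      push_cast
      field_simp
    have : idx p q n (dist p q) = 2 ^ n := by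
      unfold idx
      rw [h1, Nat.floor_natCast]
    rw [this, seq_top]
  rw [funext heq] at T1
  exact tendsto_nhds_unique T1 tendsto_const_nhds

lemma exists_geodesic (hX : IsCAT1 X) (p q : X) (hπ : dist p q < Real.pi) :
    ∃ γ : ℝ → X, γ 0 = p ∧ γ (dist p q) = q ∧ IsGeodesicOn γ 0 (dist p q) := by
  rcases eq_or_lt_of_le (dist_nonneg : (0:ℝ) ≤ dist p q) with hd | hd
  · refine ⟨fun _ => p, rfl, ?_, ?_⟩
    · have : p = q := by
        rw [← dist_eq_zero]
        exact hd.symm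
      exact this
    · intro s hs t ht
      rw [← hd] at hs ht
      have hs0 : s = 0 := le_antisymm hs.2 hs.1
      have ht0 : t = 0 := le_antisymm ht.2 ht.1
      subst hs0; subst ht0
      simp
  · exact ⟨geo hX p q, geo_zero hX p q hd hπ, geo_last hX p q hd hπ,
      fun s hs t ht => geo_dist hX p q hd hπ hs ht⟩

lemma mem_of_between (hX : IsCAT1 X) {C : Set X} (hconv : IsConvexSet C) (hcl : IsClosed C)
    {a b z : X} (ha : a ∈ C) (hb : b ∈ C) (hab : dist a b < Real.pi)
    (hz : dist a z + dist z b = dist a b) : z ∈ C := by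
  obtain ⟨γ, hγ0, hγL, hγg, hγC⟩ := hconv a ha b hb hab
  set L := dist a b with hLdef
  set t := dist a z with htdef
  have hL0 : (0:ℝ) ≤ L := dist_nonneg
  have ht0 : (0:ℝ) ≤ t := dist_nonneg
  have htL : t ≤ L := by
    have : (0:ℝ) ≤ dist z b := dist_nonneg
    linarith
  have key : ∀ n : ℕ, ∃ u v : ℝ, 0 ≤ u ∧ v ≤ L ∧ v - u = L / 2 ^ n ∧
      dist z (γ u) = t - u ∧ dist z (γ v) = v - t := by
    intro n
    induction n with
    | zero =>
      refine ⟨0, L, le_refl 0, le_refl L, by norm_num, ?_, ?_⟩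
      · rw [hγ0, dist_comm, ← htdef]
        ring
      · rw [hγL]
        linarith
    | succ n ih =>
      obtain ⟨u, v, hu0, hvL, hw, hdu, hdv⟩ := ih
      have hhw : 0 ≤ L / 2 ^ n := by positivity
      have hut : u ≤ t := by
        have : (0:ℝ) ≤ dist z (γ u) := dist_nonneg
        linarith
      have htv : t ≤ v := by
        have : (0:ℝ) ≤ dist z (γ v) := dist_nonneg
        linarith
      have huv : u ≤ v := le_trans hut htv
      have huL : u ≤ L := le_trans huv hvL
      have hv0 : 0 ≤ v := le_trans hu0 huv
      have hmu : u ∈ Set.Icc 0 L := ⟨hu0, huL⟩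
      have hmv : v ∈ Set.Icc 0 L := ⟨hv0, hvL⟩
      have hmm : (u + v) / 2 ∈ Set.Icc 0 L := ⟨by linarith, by linarith⟩
      have hhL : L / 2 ^ n ≤ L := div_le_self hL0 (one_le_pow₀ (by norm_num))
      have hhπ : L / 2 ^ n < Real.pi := lt_of_le_of_lt hhL hab
      have duv : dist (γ u) (γ v) = v - u := by
        rw [hγg u hmu v hmv, abs_of_nonpos (by linarith)]
        ring
      have dum : dist (γ u) (γ ((u + v) / 2)) = (v - u) / 2 := by
        rw [hγg u hmu ((u + v) / 2) hmm, abs_of_nonpos (by linarith)]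
        ring
      have dvm : dist (γ v) (γ ((u + v) / 2)) = (v - u) / 2 := by
        rw [hγg v hmv ((u + v) / 2) hmm, abs_of_nonneg (by linarith)]
        ring
      have e1 : dist (γ u) z = t - u := by rw [dist_comm]; exact hdu
      have e2 : dist (γ v) z = v - t := by rw [dist_comm]; exact hdv
      have comp := hX.2.2 (γ u) (γ v) z (γ ((u + v) / 2))
        (by rw [duv, hw]; exact hhπ)
        (by rw [dum, duv])
        (by rw [dvm, duv])
        (by
          rw [duv, e1, e2, hw]
          linarith)
      rw [e1, e2, duv] at comp
      set D := dist z (γ ((u + v) / 2)) with hDdef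
      have hD0 : (0:ℝ) ≤ D := dist_nonneg
      have key2 : ∀ A B : ℝ, Real.cos (B + A) + Real.cos (B - A) =
          2 * Real.cos B * Real.cos A := by
        intro A B
        rw [Real.cos_add, Real.cos_sub]
        ring
      have hcosid : Real.cos (t - u) + Real.cos (v - t) =
          2 * Real.cos ((v - u) / 2) * Real.cos (t - (u + v) / 2) := by
        rw [show t - u = (v - u) / 2 + (t - (u + v) / 2) by ring,
          show v - t = (v - u) / 2 - (t - (u + v) / 2) by ring]
        exact key2 _ _
      have hcpos : 0 < Real.cos ((v - u) / 2) := by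
        apply Real.cos_pos_of_mem_Ioo
        constructor
        · have := Real.pi_pos
          linarith
        · rw [hw]
          linarith
      have hkey : Real.cos (t - (u + v) / 2) ≤ Real.cos D := by
        have h5 : Real.cos (t - (u + v) / 2) * Real.cos ((v - u) / 2) ≤
            Real.cos D * Real.cos ((v - u) / 2) := by
          rw [hcosid] at comp
          rw [hw] at comp ⊢
          nlinarith
        exact le_of_mul_le_mul_right h5 hcpos
      have hDh : D ≤ v - u := by
        rcases le_total t ((u + v) / 2) with hc | hc
        · have htri := dist_triangle z (γ u) (γ ((u + v) / 2))
          rw [hdu, dum] at htri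
          linarith
        · have htri := dist_triangle z (γ v) (γ ((u + v) / 2))
          rw [hdv, dvm] at htri
          linarith
      have hDπ : D < Real.pi := by
        rw [hw] at hDh
        linarith
      have habs : |t - (u + v) / 2| ≤ (v - u) / 2 := by
        rw [abs_le]
        constructor <;> linarith
      have hDle : D ≤ |t - (u + v) / 2| := by
        by_contra hcon
        push_neg at hcon
        have hmem1 : |t - (u + v) / 2| ∈ Set.Icc 0 Real.pi := by
          constructor
          · exact abs_nonneg _
          · have : (v - u) / 2 ≤ Real.pi := by
              rw [hw] at habs ⊢
              linarith
            linarith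
        have hmem2 : D ∈ Set.Icc 0 Real.pi := ⟨hD0, hDπ.le⟩
        have := Real.strictAntiOn_cos hmem1 hmem2 hcon
        rw [Real.cos_abs] at this
        linarith
      have hww : L / 2 ^ (n + 1) = L / 2 ^ n / 2 := by
        rw [pow_succ, ← div_div]
      rcases le_total t ((u + v) / 2) with hc | hc
      · refine ⟨u, (u + v) / 2, hu0, by linarith, by rw [hww, ← hw]; ring, hdu, ?_⟩
        have hle : D ≤ (u + v) / 2 - t := by
          have : |t - (u + v) / 2| = (u + v) / 2 - t := by
            rw [abs_of_nonpos (by linarith)]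
            ring
          linarith [hDle, this.le]
        have hge : (u + v) / 2 - t ≤ D := by
          have htri := dist_triangle (γ u) z (γ ((u + v) / 2))
          rw [e1, ← hDdef] at htri
          rw [dum] at htri
          linarith
        linarith [le_antisymm hle hge]
      · refine ⟨(u + v) / 2, v, by linarith, hvL, by rw [hww, ← hw]; ring, ?_, hdv⟩
        have hle : D ≤ t - (u + v) / 2 := by
          have : |t - (u + v) / 2| = t - (u + v) / 2 := abs_of_nonneg (by linarith)
          linarith [hDle, this.le]
        have hge : t - (u + v) / 2 ≤ D := by
          have htri := dist_triangle (γ ((u + v) / 2)) z (γ v)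
          rw [dist_comm (γ ((u + v) / 2)) z, ← hDdef, dist_comm z (γ v), e2] at htri
          rw [dist_comm] at dvm
          rw [dvm] at htri
          linarith
        linarith [le_antisymm hle hge]
  have hz_closure : z ∈ closure C := by
    rw [Metric.mem_closure_iff]
    intro ε hε
    obtain ⟨n, hn⟩ := exists_nat_gt (L / ε)
    have h2n : L / 2 ^ n < ε := by
      have hn2 : (n : ℝ) < 2 ^ n := by exact_mod_cast Nat.lt_two_pow_self (n := n)
      rw [div_lt_iff₀ hε] at hn
      rw [div_lt_iff₀ (by positivity : (0:ℝ) < 2 ^ n)]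
      nlinarith
    obtain ⟨u, v, hu0, hvL, hw, hdu, hdv⟩ := key n
    have hut : u ≤ t := by
      have : (0:ℝ) ≤ dist z (γ u) := dist_nonneg
      linarith
    have htv : t ≤ v := by
      have : (0:ℝ) ≤ dist z (γ v) := dist_nonneg
      linarith
    have huL : u ≤ L := le_trans (le_trans hut htv) hvL
    refine ⟨γ u, hγC u ⟨hu0, huL⟩, ?_⟩
    rw [hdu]
    linarith
  rwa [hcl.closure_eq] at hz_closure

end S11

/-- In a CAT(1) space, an `r`-removable point is `r'`-removable
for every `r' > r`. -/

theorem statement11 (X : Type*) [MetricSpace X] (hX : IsCAT1 X) (x : X)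
    (r r' : ℝ) (hr : 0 < r) (hrr' : r < r')
    (h : x ∉ ClosedConvexHull (Metric.sphere x r)) :
    x ∉ ClosedConvexHull (Metric.sphere x r') := by
  intro hx
  have h' : ¬ ∀ C ∈ {C : Set X | Metric.sphere x r ⊆ C ∧ IsClosed C ∧ IsConvexSet C}, x ∈ C := by
    rw [← Set.mem_sInter]
    exact h
  push_neg at h'
  obtain ⟨C, ⟨hsub, hcl, hconv⟩, hxC⟩ := h'
  set C' : Set X := C ∪ {y : X | r ≤ dist x y} with hC'def
  have hC'cl : IsClosed C' := hcl.union (isClosed_le continuous_const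
    (continuous_const.dist continuous_id))
  have hC'conv : IsConvexSet C' := by
    intro p hp q hq hpq
    by_cases hcase : p ∈ C ∧ q ∈ C
    · obtain ⟨γ, h0, h1, h2, h3⟩ := hconv p hcase.1 q hcase.2 hpq
      exact ⟨γ, h0, h1, h2, fun s hs => Or.inl (h3 s hs)⟩
    · obtain ⟨γ, h0, h1, h2⟩ := S11.exists_geodesic hX p q hpq
      refine ⟨γ, h0, h1, h2, ?_⟩
      intro s hs
      by_cases hrs : r ≤ dist x (γ s)
      · exact Or.inr hrs
      push_neg at hrs
      left
      set d := dist p q with hddef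
      have hγcont : ContinuousOn γ (Set.Icc 0 d) := by
        rw [Metric.continuousOn_iff]
        intro w hw ε hε
        refine ⟨ε, hε, fun a haIcc hd => ?_⟩
        rw [h2 a haIcc w hw, ← Real.dist_eq]
        exact hd
      have hcont : ContinuousOn (fun w => dist x (γ w)) (Set.Icc 0 d) :=
        Continuous.comp_continuousOn (continuous_const.dist continuous_id) hγcont
      obtain ⟨s1, hs1mem, hs1C⟩ : ∃ s1, s1 ∈ Set.Icc 0 s ∧ γ s1 ∈ C := by
        by_cases hp' : p ∈ C
        · exact ⟨0, ⟨le_refl 0, hs.1⟩, h0 ▸ hp'⟩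
        · have hpr : r ≤ dist x p := hp.resolve_left hp'
          have hmono : Set.Icc (0:ℝ) s ⊆ Set.Icc 0 d := Set.Icc_subset_Icc (le_refl 0) hs.2
          have hc2 : ContinuousOn (fun w => dist x (γ w)) (Set.Icc 0 s) := hcont.mono hmono
          have hiv := intermediate_value_Icc' hs.1 hc2
          have hrmem : r ∈ Set.Icc (dist x (γ s)) (dist x (γ 0)) :=
            ⟨hrs.le, by rw [h0]; exact hpr⟩
          obtain ⟨s1, hs1, hfs1⟩ := hiv hrmem
          exact ⟨s1, hs1, hsub (by rw [Metric.mem_sphere, dist_comm]; exact hfs1)⟩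
      obtain ⟨s2, hs2mem, hs2C⟩ : ∃ s2, s2 ∈ Set.Icc s d ∧ γ s2 ∈ C := by
        by_cases hq' : q ∈ C
        · exact ⟨d, ⟨hs.2, le_refl d⟩, h1 ▸ hq'⟩
        · have hqr : r ≤ dist x q := hq.resolve_left hq'
          have hmono : Set.Icc s d ⊆ Set.Icc 0 d := Set.Icc_subset_Icc hs.1 (le_refl d)
          have hc2 : ContinuousOn (fun w => dist x (γ w)) (Set.Icc s d) := hcont.mono hmono
          have hiv := intermediate_value_Icc hs.2 hc2
          have hrmem : r ∈ Set.Icc (dist x (γ s)) (dist x (γ d)) :=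
            ⟨hrs.le, by rw [h1]; exact hqr⟩
          obtain ⟨s2, hs2, hfs2⟩ := hiv hrmem
          exact ⟨s2, hs2, hsub (by rw [Metric.mem_sphere, dist_comm]; exact hfs2)⟩
      -- γ s lies between γ s1 and γ s2
      have hm1 : s1 ∈ Set.Icc 0 d := ⟨hs1mem.1, le_trans hs1mem.2 hs.2⟩
      have hm2 : s2 ∈ Set.Icc 0 d := ⟨le_trans hs.1 hs2mem.1, hs2mem.2⟩
      have hs12 : s1 ≤ s2 := le_trans hs1mem.2 hs2mem.1
      have d12 : dist (γ s1) (γ s2) = s2 - s1 := by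
        rw [h2 s1 hm1 s2 hm2, abs_of_nonpos (by linarith)]
        ring
      have d1s : dist (γ s1) (γ s) = s - s1 := by
        rw [h2 s1 hm1 s hs, abs_of_nonpos (by linarith [hs1mem.2])]
        ring
      have ds2 : dist (γ s) (γ s2) = s2 - s := by
        rw [h2 s hs s2 hm2, abs_of_nonpos (by linarith [hs2mem.1])]
        ring
      have hd0 : (0:ℝ) ≤ d := dist_nonneg
      apply S11.mem_of_between hX hconv hcl hs1C hs2C
      · rw [d12]
        have : s2 ≤ d := hm2.2
        have : 0 ≤ s1 := hm1.1
        linarith [hpq, hm2.2, hm1.1]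
      · rw [d12, d1s, ds2]
        ring
  have hsub' : Metric.sphere x r' ⊆ C' := by
    intro y hy
    right
    rw [Metric.mem_sphere] at hy
    rw [Set.mem_setOf_eq, dist_comm, hy]
    linarith
  have hxC' : x ∈ C' := Set.mem_sInter.1 hx C' ⟨hsub', hC'cl, hC'conv⟩
  rcases hxC' with hc | hc
  · exact hxC hc
  · rw [Set.mem_setOf_eq, dist_self] at hc
    linarith
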